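/- (Theorem 1) Let f_1, …, f_N : ℝⁿ → ℝⁿ be continuous vector fields. Assume there exist a continuously differentiable function V : ℝⁿ → ℝ, a compact set B ⊆ ℝⁿ, and constants γ ∈ ℝ, ρ > 0 such that V(x) = γ for all x on the topological boundary of B, V(x) > γ for all x ∈ ℝⁿ \ B, and ∇V(x) · f_i(x) ≤ -ρ for all x ∈ ℝⁿ \ B and all i = 1, …, N. Then B is an absorbing set for the switched system; moreover, for any compact set C ⊆ ℝⁿ not contained in B, the time t*_C = (max{V(y) : y ∈ closure(C \ B)} - γ)/ρ works: every solution with x(0) ∈ C satisfies x(t) ∈ B for all t ≥ t*_C. -/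

import Mathlib

/-- A solution of the switched system determined by the vector fields `f i` on `ℝⁿ`:
a function differentiable on `[0,∞)` such that at every time `t ≥ 0` its derivative
(within `[0,∞)`) is given by one of the vector fields (arbitrary switching). -/
def IsSwitchedSolution {n N : ℕ}
    (f : Fin N → EuclideanSpace ℝ (Fin n) → EuclideanSpace ℝ (Fin n))
    (x : ℝ → EuclideanSpace ℝ (Fin n)) : Prop :=
  ∀ t : ℝ, 0 ≤ t → ∃ i : Fin N, HasDerivWithinAt x (f i (x t)) (Set.Ici 0) t

/-- `M` is positively invariant for the switched system. -/
def PositivelyInvariant {n N : ℕ}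
    (f : Fin N → EuclideanSpace ℝ (Fin n) → EuclideanSpace ℝ (Fin n))
    (M : Set (EuclideanSpace ℝ (Fin n))) : Prop :=
  ∀ x : ℝ → EuclideanSpace ℝ (Fin n), IsSwitchedSolution f x →
    x 0 ∈ M → ∀ t : ℝ, 0 ≤ t → x t ∈ M

/-- `M` is an absorbing set for the switched system: it is positively invariant and
every compact set is uniformly absorbed into `M` after some time. -/
def AbsorbingSet {n N : ℕ}
    (f : Fin N → EuclideanSpace ℝ (Fin n) → EuclideanSpace ℝ (Fin n))
    (M : Set (EuclideanSpace ℝ (Fin n))) : Prop :=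
  PositivelyInvariant f M ∧
    ∀ C : Set (EuclideanSpace ℝ (Fin n)), IsCompact C →
      ∃ tC : ℝ, 0 ≤ tC ∧
        ∀ x : ℝ → EuclideanSpace ℝ (Fin n), IsSwitchedSolution f x →
          x 0 ∈ C → ∀ t : ℝ, tC ≤ t → x t ∈ M

section Aux
variable {n N : ℕ}
  {f : Fin N → EuclideanSpace ℝ (Fin n) → EuclideanSpace ℝ (Fin n)}
  {V : EuclideanSpace ℝ (Fin n) → ℝ}
  {B : Set (EuclideanSpace ℝ (Fin n))}
  {γ ρ : ℝ}

lemma sol_contOn {x : ℝ → EuclideanSpace ℝ (Fin n)} (hx : IsSwitchedSolution f x) :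
    ContinuousOn x (Set.Ici 0) := fun t ht => (hx t ht).choose_spec.continuousWithinAt

lemma decay (hV : ContDiff ℝ 1 V) (hρ : 0 < ρ)
    (hdec : ∀ x ∉ B, ∀ i : Fin N, fderiv ℝ V x (f i x) ≤ -ρ)
    {x : ℝ → EuclideanSpace ℝ (Fin n)} (hx : IsSwitchedSolution f x)
    {a b : ℝ} (ha : 0 ≤ a) (hab : a ≤ b) (hout : ∀ t ∈ Set.Ioo a b, x t ∉ B) :
    V (x b) + ρ * b ≤ V (x a) + ρ * a := by
  set g : ℝ → ℝ := fun t => V (x t) + ρ * t with hgdef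
  have hsub : Set.Icc a b ⊆ Set.Ici 0 :=
    Set.Icc_subset_Ici_self.trans (Set.Ici_subset_Ici.mpr ha)
  have hcont : ContinuousOn g (Set.Icc a b) := by
    apply ContinuousOn.add
    · exact hV.continuous.comp_continuousOn ((sol_contOn hx).mono hsub)
    · exact (continuous_const.mul continuous_id).continuousOn
  have hderiv : ∀ t ∈ Set.Ioo a b, ∃ d, d ≤ 0 ∧ HasDerivAt g d t := by
    intro t ht
    have ht0 : 0 < t := lt_of_le_of_lt ha ht.1
    obtain ⟨i, hi⟩ := hx t ht0.le
    have hx' : HasDerivAt x (f i (x t)) t := hi.hasDerivAt (Ici_mem_nhds ht0)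
    have hVd : HasFDerivAt V (fderiv ℝ V (x t)) (x t) :=
      (hV.differentiable one_ne_zero (x t)).hasFDerivAt
    have hVc : HasDerivAt (fun s => V (x s)) (fderiv ℝ V (x t) (f i (x t))) t :=
      hVd.comp_hasDerivAt t hx'
    refine ⟨_, ?_, hVc.add ((hasDerivAt_id t).const_mul ρ)⟩
    have hle := hdec (x t) (hout t ht) i
    nlinarith
  have hanti : AntitoneOn g (Set.Icc a b) := by
    apply antitoneOn_of_deriv_nonpos (convex_Icc a b) hcont
    · intro t ht
      rw [interior_Icc] at ht
      obtain ⟨d, _, hd⟩ := hderiv t ht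
      exact hd.differentiableAt.differentiableWithinAt
    · intro t ht
      rw [interior_Icc] at ht
      obtain ⟨d, hd0, hd⟩ := hderiv t ht
      rw [hd.deriv]; exact hd0
  exact hanti (Set.left_mem_Icc.mpr hab) (Set.right_mem_Icc.mpr hab) hab

lemma invariant (hV : ContDiff ℝ 1 V) (hB : IsCompact B) (hρ : 0 < ρ)
    (hbd : ∀ x ∈ frontier B, V x = γ)
    (hgt : ∀ x ∉ B, V x > γ)
    (hdec : ∀ x ∉ B, ∀ i : Fin N, fderiv ℝ V x (f i x) ≤ -ρ)
    {x : ℝ → EuclideanSpace ℝ (Fin n)} (hx : IsSwitchedSolution f x)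
    {s t : ℝ} (hs : 0 ≤ s) (hst : s ≤ t) (hxs : x s ∈ B) : x t ∈ B := by
  by_contra hxt
  have hsub : Set.Icc s t ⊆ Set.Ici 0 :=
    Set.Icc_subset_Ici_self.trans (Set.Ici_subset_Ici.mpr hs)
  have hxc : ContinuousOn x (Set.Icc s t) := (sol_contOn hx).mono hsub
  set S : Set ℝ := Set.Icc s t ∩ x ⁻¹' B with hSdef
  have hSclosed : IsClosed S := hxc.preimage_isClosed_of_isClosed isClosed_Icc hB.isClosed
  have hScpt : IsCompact S := isCompact_Icc.of_isClosed_subset hSclosed Set.inter_subset_left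
  have hSne : S.Nonempty := ⟨s, ⟨le_rfl, hst⟩, hxs⟩
  set u := sSup S with hudef
  have huS : u ∈ S := hScpt.sSup_mem hSne
  have hsu : s ≤ u := le_csSup hScpt.bddAbove ⟨⟨le_rfl, hst⟩, hxs⟩
  have hu0 : (0:ℝ) ≤ u := hs.trans hsu
  have hut : u ≤ t := huS.1.2
  have hout : ∀ r ∈ Set.Ioc u t, x r ∉ B := by
    intro r hr hrB
    have hrS : r ∈ S := ⟨⟨hsu.trans hr.1.le, hr.2⟩, hrB⟩
    exact absurd (le_csSup hScpt.bddAbove hrS) (not_le.mpr hr.1)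
  have hult : u < t := by
    rcases lt_or_eq_of_le hut with h | h
    · exact h
    · exact absurd (h ▸ huS.2) hxt
  have hxu_front : x u ∈ frontier B := by
    rw [frontier_eq_closure_inter_closure]
    refine ⟨subset_closure huS.2, ?_⟩
    have htend : Filter.Tendsto x (nhdsWithin u (Set.Ioi u)) (nhds (x u)) :=
      ((sol_contOn hx) u hu0).mono (Set.Ioi_subset_Ici hu0)
    refine mem_closure_of_tendsto htend ?_
    filter_upwards [Ioc_mem_nhdsGT_of_mem ⟨le_rfl, hult⟩] with r hr
    exact hout r hr
  have hVxu : V (x u) = γ := hbd _ hxu_front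
  have hdecay := decay hV hρ hdec hx hu0 hult.le
    (fun r hr => hout r ⟨hr.1, hr.2.le⟩)
  have hVxt : V (x t) > γ := hgt _ hxt
  rw [hVxu] at hdecay
  nlinarith

lemma absorb (hV : ContDiff ℝ 1 V) (hB : IsCompact B) (hρ : 0 < ρ)
    (hbd : ∀ x ∈ frontier B, V x = γ)
    (hgt : ∀ x ∉ B, V x > γ)
    (hdec : ∀ x ∉ B, ∀ i : Fin N, fderiv ℝ V x (f i x) ≤ -ρ)
    {C : Set (EuclideanSpace ℝ (Fin n))} (hC : IsCompact C) (hCB : ¬ C ⊆ B)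
    {x : ℝ → EuclideanSpace ℝ (Fin n)} (hx : IsSwitchedSolution f x) (hx0 : x 0 ∈ C)
    {t : ℝ} (ht : (sSup (V '' closure (C \ B)) - γ) / ρ ≤ t) : x t ∈ B := by
  set K := closure (C \ B) with hKdef
  have hKC : K ⊆ C := closure_minimal Set.diff_subset hC.isClosed
  have hKcpt : IsCompact K := hC.of_isClosed_subset isClosed_closure hKC
  obtain ⟨c, hcC, hcB⟩ := Set.not_subset.mp hCB
  have hcK : c ∈ K := subset_closure ⟨hcC, hcB⟩
  set M := sSup (V '' K) with hMdef
  have hbdd : BddAbove (V '' K) := (hKcpt.image hV.continuous).bddAbove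
  have hcM : V c ≤ M := le_csSup hbdd (Set.mem_image_of_mem _ hcK)
  have hMγ : γ < M := lt_of_lt_of_le (hgt c hcB) hcM
  have ht0 : 0 ≤ t := le_trans (div_nonneg (by linarith) hρ.le) ht
  by_cases hcase : ∃ s ∈ Set.Icc (0:ℝ) t, x s ∈ B
  · obtain ⟨s, hsI, hsB⟩ := hcase
    exact invariant hV hB hρ hbd hgt hdec hx hsI.1 hsI.2 hsB
  · push_neg at hcase
    exfalso
    have hx0B : x 0 ∉ B := hcase 0 ⟨le_rfl, ht0⟩
    have hxtB : x t ∉ B := hcase t ⟨ht0, le_rfl⟩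
    have hdecay := decay hV hρ hdec hx le_rfl ht0
      (fun r hr => hcase r ⟨hr.1.le, hr.2.le⟩)
    have hVx0 : V (x 0) ≤ M := le_csSup hbdd
      (Set.mem_image_of_mem _ (subset_closure ⟨hx0, hx0B⟩))
    have hVxt : V (x t) > γ := hgt _ hxtB
    have hρt : M - γ ≤ ρ * t := by
      rw [div_le_iff₀ hρ] at ht; linarith
    nlinarith

end Aux


/-- Theorem 1: under the Lyapunov-type conditions, `B` is an absorbing set for the
switched system; moreover, for any compact `C ⊄ B` the explicit time
`t*_C = (max_{closure (C \ B)} V - γ)/ρ` works. -/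
theorem absorbing_set_of_lyapunov {n N : ℕ}
    (f : Fin N → EuclideanSpace ℝ (Fin n) → EuclideanSpace ℝ (Fin n))
    (hf : ∀ i, Continuous (f i))
    (V : EuclideanSpace ℝ (Fin n) → ℝ) (hV : ContDiff ℝ 1 V)
    (B : Set (EuclideanSpace ℝ (Fin n))) (hB : IsCompact B)
    (γ ρ : ℝ) (hρ : 0 < ρ)
    (hbd : ∀ x ∈ frontier B, V x = γ)
    (hgt : ∀ x ∉ B, V x > γ)
    (hdec : ∀ x ∉ B, ∀ i : Fin N, fderiv ℝ V x (f i x) ≤ -ρ) :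
    AbsorbingSet f B ∧
      ∀ C : Set (EuclideanSpace ℝ (Fin n)), IsCompact C → ¬ C ⊆ B →
        ∀ x : ℝ → EuclideanSpace ℝ (Fin n), IsSwitchedSolution f x → x 0 ∈ C →
          ∀ t : ℝ, (sSup (V '' closure (C \ B)) - γ) / ρ ≤ t → x t ∈ B := by
  refine ⟨⟨?_, ?_⟩, ?_⟩
  · intro x hx hx0 t ht
    exact invariant hV hB hρ hbd hgt hdec hx le_rfl ht hx0
  · intro C hC
    by_cases hCB : C ⊆ B
    · exact ⟨0, le_rfl, fun x hx hx0 t ht =>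
        invariant hV hB hρ hbd hgt hdec hx le_rfl ht (hCB hx0)⟩
    · refine ⟨(sSup (V '' closure (C \ B)) - γ) / ρ, ?_, fun x hx hx0 t ht =>
        absorb hV hB hρ hbd hgt hdec hC hCB hx hx0 ht⟩
      obtain ⟨c, hcC, hcB⟩ := Set.not_subset.mp hCB
      have hcK : c ∈ closure (C \ B) := subset_closure ⟨hcC, hcB⟩
      have hbdd : BddAbove (V '' closure (C \ B)) :=
        ((hC.of_isClosed_subset isClosed_closure
          (closure_minimal Set.diff_subset hC.isClosed)).image hV.continuous).bddAbove
      have : γ < sSup (V '' closure (C \ B)) :=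
        lt_of_lt_of_le (hgt c hcB) (le_csSup hbdd (Set.mem_image_of_mem _ hcK))
      exact div_nonneg (by linarith) hρ.le
  · intro C hC hCB x hx hx0 t ht
    exact absorb hV hB hρ hbd hgt hdec hC hCB hx hx0 ht
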